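/- For all real numbers a₁, a₃, b₃ there exists a real number p with cos p ≠ 1 (i.e. p is not an integer multiple of 2π) such that (cos p − 1)·(2a₁ − a₃p + b₃·p·a₁) + (2 + b₃p)·sin p = 0. -/

import Mathlib

open Real Set Filter Topology

lemma aux_root (f : ℝ → ℝ) (hf : Continuous f) {L R cL cR : ℝ} (hLR : L < R)
    (hfL : f L = 0) (hfR : f R = 0) (hL : HasDerivAt f cL L) (hR : HasDerivAt f cR R)
    (hcL : 0 < cL) (hcR : 0 < cR) : ∃ p ∈ Set.Ioo L R, f p = 0 := by
  -- find y close to R with f y < 0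
  have hRs : Tendsto (slope f R) (𝓝[<] R) (𝓝 cR) :=
    (hasDerivAt_iff_tendsto_slope.mp hR).mono_left
      (nhdsWithin_mono _ (fun x hx => ne_of_lt hx))
  have h2 : ∀ᶠ y in 𝓝[<] R, 0 < slope f R y := hRs.eventually (eventually_gt_nhds hcR)
  have h2' : Ioo L R ∈ 𝓝[<] R := Ioo_mem_nhdsLT_of_mem ⟨hLR, le_refl R⟩
  obtain ⟨y, hy1, hy2⟩ := (h2.and (eventually_of_mem h2' (fun _ h => h))).exists
  have hfy : f y < 0 := by
    have hslope : slope f R y = f y / (y - R) := by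
      simp [slope_def_field, hfR, div_eq_div_iff]
    rw [hslope] at hy1
    rcases div_pos_iff.mp hy1 with ⟨h, h'⟩ | ⟨h, h'⟩
    · linarith [hy2.2]
    · exact h
  -- find x close to L with f x > 0, with x < y
  have hLs : Tendsto (slope f L) (𝓝[>] L) (𝓝 cL) :=
    (hasDerivAt_iff_tendsto_slope.mp hL).mono_left
      (nhdsWithin_mono _ (fun x hx => ne_of_gt hx))
  have h1 : ∀ᶠ x in 𝓝[>] L, 0 < slope f L x := hLs.eventually (eventually_gt_nhds hcL)
  have h1' : Ioo L y ∈ 𝓝[>] L := Ioo_mem_nhdsGT_of_mem ⟨le_refl L, hy2.1⟩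
  obtain ⟨x, hx1, hx2⟩ := (h1.and (eventually_of_mem h1' (fun _ h => h))).exists
  have hfx : 0 < f x := by
    have hslope : slope f L x = f x / (x - L) := by
      simp [slope_def_field, hfL]
    rw [hslope] at hx1
    rcases div_pos_iff.mp hx1 with ⟨h, h'⟩ | ⟨h, h'⟩
    · exact h
    · linarith [hx2.1]
  -- IVT
  have hsub : Set.Icc (f y) (f x) ⊆ f '' Set.Icc x y :=
    intermediate_value_Icc' (le_of_lt hx2.2) hf.continuousOn
  obtain ⟨p, hp, hfp⟩ := hsub ⟨le_of_lt hfy, le_of_lt hfx⟩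
  exact ⟨p, ⟨lt_of_lt_of_le hx2.1 hp.1, lt_of_le_of_lt hp.2 hy2.2⟩, hfp⟩

theorem stmt_2 (a₁ a₃ b₃ : ℝ) :
    ∃ p : ℝ, Real.cos p ≠ 1 ∧
      (Real.cos p - 1) * (2 * a₁ - a₃ * p + b₃ * p * a₁) + (2 + b₃ * p) * Real.sin p = 0 := by
  set f : ℝ → ℝ := fun p =>
    (Real.cos p - 1) * (2 * a₁ - a₃ * p + b₃ * p * a₁) + (2 + b₃ * p) * Real.sin p with hf_def
  have hcont : Continuous f := by fun_prop
  have hD : ∀ p : ℝ, HasDerivAt f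
      ((-Real.sin p) * (2 * a₁ - a₃ * p + b₃ * p * a₁) +
        (Real.cos p - 1) * (-a₃ + b₃ * a₁) +
        (b₃ * Real.sin p + (2 + b₃ * p) * Real.cos p)) p := by
    intro p
    have h1 : HasDerivAt (fun q : ℝ => Real.cos q - 1) (-Real.sin p) p :=
      (Real.hasDerivAt_cos p).sub_const 1
    have h2 : HasDerivAt (fun q : ℝ => 2 * a₁ - a₃ * q + b₃ * q * a₁) (-a₃ + b₃ * a₁) p := by
      have := (((hasDerivAt_id p).const_mul a₃).const_sub (2 * a₁)).add
        (((hasDerivAt_id p).const_mul b₃).mul_const a₁)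
      exact this.congr_deriv (by ring)
    have h3 : HasDerivAt (fun q : ℝ => 2 + b₃ * q) b₃ p := by
      simpa using ((hasDerivAt_id p).const_mul b₃).const_add 2
    have := (h1.mul h2).add (h3.mul (Real.hasDerivAt_sin p))
    exact this.congr_deriv (by ring)
  have hf0 : f 0 = 0 := by simp [hf_def]
  have hf2pi : f (2 * π) = 0 := by
    simp [hf_def, Real.cos_two_pi, Real.sin_two_pi]
  have hfneg2pi : f (-(2 * π)) = 0 := by
    simp [hf_def, Real.cos_two_pi, Real.sin_two_pi]
  have hD0 : HasDerivAt f 2 0 := by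
    have := hD 0; simpa using this
  have hpi : (0:ℝ) < π := Real.pi_pos
  rcases le_or_gt 0 b₃ with hb | hb
  · -- use interval (0, 2π)
    have hD2pi : HasDerivAt f (2 + b₃ * (2 * π)) (2 * π) := by
      have := hD (2 * π)
      simpa [Real.cos_two_pi, Real.sin_two_pi] using this
    obtain ⟨p, hp, hfp⟩ := aux_root f hcont (by linarith) hf0 hf2pi hD0 hD2pi
      (by norm_num) (by nlinarith)
    refine ⟨p, ?_, hfp⟩
    intro hcos
    have := (Real.cos_eq_one_iff_of_lt_of_lt (by linarith [hp.1, hp.2]) hp.2).mp hcos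
    exact absurd this (ne_of_gt hp.1)
  · -- use interval (-2π, 0)
    have hDneg : HasDerivAt f (2 + b₃ * -(2 * π)) (-(2 * π)) := by
      have := hD (-(2 * π))
      simpa [Real.cos_two_pi, Real.sin_two_pi] using this
    obtain ⟨p, hp, hfp⟩ := aux_root f hcont (by linarith : -(2*π) < 0) hfneg2pi hf0 hDneg hD0
      (by nlinarith) (by norm_num)
    refine ⟨p, ?_, hfp⟩
    intro hcos
    have := (Real.cos_eq_one_iff_of_lt_of_lt hp.1 (by linarith [hp.1, hp.2])).mp hcos
    exact absurd this (ne_of_lt hp.2)
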